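/- For every prime p, every free group (on an arbitrary set of generators) is residually p-finite. -/

import Mathlib

/-- A group `G` is residually `p`-finite if every non-trivial element is detected by a
homomorphism to a finite `p`-group. -/
def ResiduallyPFinite (p : ℕ) (G : Type*) [Group G] : Prop :=
  ∀ g : G, g ≠ 1 → ∃ (Q : Type) (_ : Group Q) (_ : Fintype Q) (φ : G →* Q),
    IsPGroup p Q ∧ φ g ≠ 1

namespace RPFaux

open Matrix Finset

variable {α : Type*}

section Defs

variable (p : ℕ) (L : List (α × Bool))

/-- The matrix ring we work in. -/
abbrev Mat : Type := Matrix (Fin (L.length + 1)) (Fin (L.length + 1)) (ZMod p)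

open Classical in
/-- The superdiagonal matrix with a `1` at `(i, i+1)` whenever the letter at position `i`
of `L` is `(a, c)`. -/
noncomputable def R (a : α) (c : Bool) : Mat p L :=
  fun i j => if ((i : ℕ) + 1 = (j : ℕ) ∧ L[(i : ℕ)]? = some (a, c)) then 1 else 0

/-- A matrix supported on the superdiagonal positions of the occurrences of `(a, c)`. -/
def Supported (a : α) (c : Bool) (N : Mat p L) : Prop :=
  ∀ i j, N i j ≠ 0 → ((i : ℕ) + 1 = (j : ℕ) ∧ L[(i : ℕ)]? = some (a, c))

variable {p L}

theorem supported_R (a : α) (c : Bool) : Supported p L a c (R p L a c) := by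
  intro i j h
  by_contra hc
  exact h (if_neg hc)

theorem Supported.neg {a : α} {c : Bool} {N : Mat p L} (h : Supported p L a c N) :
    Supported p L a c (-N) := by
  intro i j hij
  exact h i j (by simpa using hij)

theorem Supported.upper {a : α} {c : Bool} {N : Mat p L} (h : Supported p L a c N) :
    ∀ i j : Fin (L.length + 1), (j : ℕ) ≤ (i : ℕ) → N i j = 0 := by
  intro i j hij
  by_contra hc
  have := (h i j hc).1
  omega

/-- Powers of a supported matrix cannot jump over a position `k` not labelled `(a,c)`. -/
theorem chain_zero {a : α} {c : Bool} {N : Mat p L} (hN : Supported p L a c N) {k : ℕ}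
    (hk : L[k]? ≠ some (a, c)) :
    ∀ (t : ℕ) (i m : Fin (L.length + 1)), (i : ℕ) ≤ k → k < (m : ℕ) → (N ^ t) i m = 0 := by
  intro t
  induction t with
  | zero =>
    intro i m h1 h2
    rw [pow_zero]
    exact Matrix.one_apply_ne (by intro h; subst h; omega)
  | succ t ih =>
    intro i m h1 h2
    rw [pow_succ', Matrix.mul_apply]
    refine Finset.sum_eq_zero fun h _ => ?_
    by_cases hz : N i h = 0
    · rw [hz, zero_mul]
    · obtain ⟨hh, hL⟩ := hN i h hz
      have hik : (i : ℕ) ≠ k := fun he => hk (he ▸ hL)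
      have : (h : ℕ) ≤ k := by omega
      rw [ih h m this h2, mul_zero]

/-- Positive powers of a supported matrix have zero row at a position not labelled `(a,c)`. -/
theorem row_zero {a : α} {c : Bool} {N : Mat p L} (hN : Supported p L a c N)
    {r : Fin (L.length + 1)} (hr : L[(r : ℕ)]? ≠ some (a, c)) :
    ∀ t : ℕ, 1 ≤ t → ∀ m, (N ^ t) r m = 0 := by
  intro t ht m
  obtain ⟨t', rfl⟩ : ∃ t'', t = t'' + 1 := ⟨t - 1, by omega⟩
  rw [pow_succ', Matrix.mul_apply]
  refine Finset.sum_eq_zero fun h _ => ?_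
  by_cases hz : N r h = 0
  · rw [hz, zero_mul]
  · exact absurd (hN r h hz).2 hr

theorem upper_pow {N : Mat p L} (hN : ∀ i j : Fin (L.length + 1), (j : ℕ) ≤ (i : ℕ) → N i j = 0) :
    ∀ (t : ℕ) (i j : Fin (L.length + 1)), (j : ℕ) < (i : ℕ) + t → (N ^ t) i j = 0 := by
  intro t
  induction t with
  | zero =>
    intro i j h
    rw [pow_zero]
    exact Matrix.one_apply_ne (by intro he; subst he; omega)
  | succ t ih =>
    intro i j h
    rw [pow_succ', Matrix.mul_apply]
    refine Finset.sum_eq_zero fun h' _ => ?_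
    by_cases hz : (h' : ℕ) ≤ (i : ℕ)
    · rw [hN i h' hz, zero_mul]
    · rw [ih h' j (by omega), mul_zero]

theorem pow_card_zero {N : Mat p L} (hN : ∀ i j : Fin (L.length + 1), (j : ℕ) ≤ (i : ℕ) → N i j = 0) :
    N ^ (L.length + 1) = 0 := by
  ext i j
  rw [upper_pow hN (L.length + 1) i j (by omega)]
  rfl

variable (p L) in
/-- Explicit inverse of `1 + N` for strictly upper triangular `N`. -/
noncomputable def geomInv (N : Mat p L) : Mat p L :=
  ∑ t ∈ Finset.range (L.length + 1), (-N) ^ t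

theorem neg_upper {N : Mat p L} (hN : ∀ i j : Fin (L.length + 1), (j : ℕ) ≤ (i : ℕ) → N i j = 0) :
    ∀ i j : Fin (L.length + 1), (j : ℕ) ≤ (i : ℕ) → (-N) i j = 0 := by
  intro i j h
  simp [hN i j h]

theorem mul_geomInv {N : Mat p L} (hN : ∀ i j : Fin (L.length + 1), (j : ℕ) ≤ (i : ℕ) → N i j = 0) :
    (1 + N) * geomInv p L N = 1 := by
  have h0 : (-N) ^ (L.length + 1) = 0 := pow_card_zero (neg_upper hN)
  have h := mul_neg_geom_sum (-N) (L.length + 1)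
  rw [sub_neg_eq_add, h0, sub_zero] at h
  exact h

theorem geomInv_mul {N : Mat p L} (hN : ∀ i j : Fin (L.length + 1), (j : ℕ) ≤ (i : ℕ) → N i j = 0) :
    geomInv p L N * (1 + N) = 1 := by
  have h0 : (-N) ^ (L.length + 1) = 0 := pow_card_zero (neg_upper hN)
  have h := geom_sum_mul (-N) (L.length + 1)
  rw [h0, zero_sub] at h
  have h1 : (-N) - 1 = -(1 + N) := by
    rw [sub_eq_add_neg, neg_add, add_comm]
  rw [h1, mul_neg, neg_eq_iff_eq_neg, neg_neg] at h
  exact h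

variable (p L) in
/-- The unit `1 + R a c`. -/
noncomputable def uR (a : α) (c : Bool) : (Mat p L)ˣ :=
  ⟨1 + R p L a c, geomInv p L (R p L a c),
    mul_geomInv (supported_R a c).upper, geomInv_mul (supported_R a c).upper⟩

variable (p L) in
/-- Unitriangular predicate. -/
def Uni (A : Mat p L) : Prop :=
  ∀ i j : Fin (L.length + 1), (j : ℕ) ≤ (i : ℕ) → A i j = (1 : Mat p L) i j

theorem uni_one : Uni p L 1 := fun _ _ _ => rfl

theorem Uni.mul {A B : Mat p L} (hA : Uni p L A) (hB : Uni p L B) : Uni p L (A * B) := by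
  intro i j hij
  rw [Matrix.mul_apply]
  rw [Finset.sum_eq_single i]
  · rw [hA i i le_rfl, Matrix.one_apply_eq, one_mul]
    exact hB i j hij
  · intro k _ hk
    by_cases hki : (k : ℕ) ≤ (i : ℕ)
    · rw [hA i k hki, Matrix.one_apply_ne (Ne.symm hk), zero_mul]
    · have : (j : ℕ) ≤ (k : ℕ) := by omega
      rw [hB k j this, Matrix.one_apply_ne (by intro he; subst he; omega), mul_zero]
  · intro h
    exact absurd (Finset.mem_univ i) h

theorem uni_one_add_R (a : α) (c : Bool) : Uni p L (1 + R p L a c) := by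
  intro i j hij
  have : R p L a c i j = 0 := (supported_R a c).upper i j hij
  simp [Matrix.add_apply, this]

theorem uni_geomInv (a : α) (c : Bool) : Uni p L (geomInv p L (R p L a c)) := by
  intro i j hij
  rw [geomInv]
  rw [Matrix.sum_apply]
  rw [Finset.sum_eq_single 0]
  · rw [pow_zero]
  · intro t _ ht
    exact upper_pow (neg_upper (supported_R a c).upper) t i j
      (by omega)
  · intro h
    exact absurd (Finset.self_mem_range_succ 0 : (0:ℕ) ∈ Finset.range (0+1))
      (by simp at h ⊢)

variable (p L) in
/-- The subgroup of unitriangular units. -/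
noncomputable def U : Subgroup (Mat p L)ˣ where
  carrier := {u | Uni p L u.val ∧ Uni p L (↑u⁻¹ : Mat p L)}
  one_mem' := ⟨uni_one, by rw [inv_one, Units.val_one]; exact uni_one⟩
  mul_mem' := by
    rintro u v ⟨hu1, hu2⟩ ⟨hv1, hv2⟩
    refine ⟨?_, ?_⟩
    · rw [Units.val_mul]; exact hu1.mul hv1
    · rw [_root_.mul_inv_rev, Units.val_mul]; exact hv2.mul hu2
  inv_mem' := by
    rintro u ⟨hu1, hu2⟩
    exact ⟨hu2, by rw [inv_inv]; exact hu1⟩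

variable (p L) in
/-- The image of the generator `a`. -/
noncomputable def gmat (a : α) : (Mat p L)ˣ :=
  uR p L a true * (uR p L a false)⁻¹

theorem gmat_mem (a : α) : gmat p L a ∈ U p L := by
  constructor
  · rw [gmat, Units.val_mul]
    exact (uni_one_add_R a true).mul (uni_geomInv a false)
  · rw [gmat, _root_.mul_inv_rev, inv_inv, Units.val_mul]
    exact (uni_one_add_R a false).mul (uni_geomInv a true)

theorem pgroup (hp : p.Prime) : IsPGroup p ↥(U p L) := by
  haveI : Fact p.Prime := ⟨hp⟩
  intro u
  refine ⟨L.length + 1, ?_⟩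
  set v : (Mat p L)ˣ := (u : (Mat p L)ˣ) with hv
  have hUni : Uni p L v.val := u.2.1
  set N : Mat p L := v.val - 1 with hN
  have hNu : ∀ i j : Fin (L.length + 1), (j : ℕ) ≤ (i : ℕ) → N i j = 0 := by
    intro i j hij
    rw [hN, Matrix.sub_apply, hUni i j hij, sub_self]
  have hle : L.length + 1 ≤ p ^ (L.length + 1) := by
    calc L.length + 1 ≤ 2 ^ (L.length + 1) := Nat.lt_two_pow_self.le
    _ ≤ p ^ (L.length + 1) := Nat.pow_le_pow_left hp.two_le _
  have hval : v.val ^ (p ^ (L.length + 1)) = 1 := by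
    have h1 : v.val = 1 + N := by rw [hN]; abel
    have hb := add_pow_char_pow_of_commute (R := Mat p L) (p := p) (n := L.length + 1)
      (Commute.one_left N)
    rw [h1, hb, one_pow, pow_eq_zero_of_le hle (pow_card_zero hNu), add_zero]
  have hvpow : v ^ (p ^ (L.length + 1)) = 1 := by
    apply Units.ext
    rw [Units.val_pow_eq_pow_val, hval, Units.val_one]
  apply Subtype.ext
  rw [SubmonoidClass.coe_pow, OneMemClass.coe_one, ← hv, hvpow]

variable (p L) in
/-- The matrix product associated to a word. -/
noncomputable def matProd (l : List (α × Bool)) : Mat p L :=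
  (l.map fun x => ((cond x.2 (gmat p L x.1) (gmat p L x.1)⁻¹ : (Mat p L)ˣ) : Mat p L)).prod

theorem mulVec_apply (A : Mat p L) (u : Fin (L.length + 1) → ZMod p) (i : Fin (L.length + 1)) :
    (A *ᵥ u) i = ∑ m, A i m * u m := rfl

theorem geomInv_mulVec_apply (N : Mat p L) (u : Fin (L.length + 1) → ZMod p)
    (i : Fin (L.length + 1)) :
    (geomInv p L N *ᵥ u) i = ∑ t ∈ Finset.range (L.length + 1), (((-N) ^ t) *ᵥ u) i := by
  rw [geomInv]
  rw [mulVec_apply]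
  simp only [Matrix.sum_apply, Finset.sum_mul]
  rw [Finset.sum_comm]
  refine Finset.sum_congr rfl fun t _ => ?_
  rw [mulVec_apply]

/-- The key step lemma. -/
theorem step {a : α} {s : Bool} {j : ℕ} (hj : j < L.length) (hL : L[j]? = some (a, s))
    (hnr : L[j + 1]? ≠ some (a, !s)) (u : Fin (L.length + 1) → ZMod p)
    (hu1 : u ⟨j + 1, by omega⟩ = 1) (hu0 : ∀ i : Fin (L.length + 1), (i : ℕ) ≤ j → u i = 0) :
    ((((1 + R p L a s) * geomInv p L (R p L a (!s))) *ᵥ u) ⟨j, by omega⟩ = 1 ∧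
      ∀ i : Fin (L.length + 1), (i : ℕ) < j →
        (((1 + R p L a s) * geomInv p L (R p L a (!s))) *ᵥ u) i = 0) := by
  have hsne : s ≠ !s := by cases s <;> simp
  have hkne : L[j]? ≠ some (a, !s) := by
    rw [hL]; intro h; injection h with h'; cases s <;> simp_all
  set v₁ : Fin (L.length + 1) → ZMod p := geomInv p L (R p L a (!s)) *ᵥ u with hv₁
  have hv₁low : ∀ i : Fin (L.length + 1), (i : ℕ) ≤ j → v₁ i = 0 := by
    intro i hi
    rw [hv₁, geomInv_mulVec_apply]
    refine Finset.sum_eq_zero fun t _ => ?_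
    rw [mulVec_apply]
    refine Finset.sum_eq_zero fun m _ => ?_
    by_cases hm : (m : ℕ) ≤ j
    · rw [hu0 m hm, mul_zero]
    · rw [chain_zero (supported_R a (!s)).neg hkne t i m hi (by omega), zero_mul]
  have hv₁1 : v₁ ⟨j + 1, by omega⟩ = 1 := by
    rw [hv₁, geomInv_mulVec_apply]
    rw [Finset.sum_eq_single 0]
    · rw [pow_zero, Matrix.one_mulVec, hu1]
    · intro t _ ht
      rw [mulVec_apply]
      refine Finset.sum_eq_zero fun m _ => ?_
      rw [row_zero (supported_R a (!s)).neg (by exact hnr) t (by omega) m, zero_mul]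
    · intro h
      exact absurd (by simp : (0:ℕ) ∈ Finset.range (L.length + 1)) h
  have hsplit : ((1 + R p L a s) * geomInv p L (R p L a (!s))) *ᵥ u
      = v₁ + (R p L a s) *ᵥ v₁ := by
    rw [← Matrix.mulVec_mulVec, ← hv₁, Matrix.add_mulVec, Matrix.one_mulVec]
  have hRlow : ∀ i : Fin (L.length + 1), (i : ℕ) < j → ((R p L a s) *ᵥ v₁) i = 0 := by
    intro i hi
    rw [mulVec_apply]
    refine Finset.sum_eq_zero fun m _ => ?_
    by_cases hz : R p L a s i m = 0
    · rw [hz, zero_mul]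
    · obtain ⟨hm, _⟩ := supported_R a s i m hz
      rw [hv₁low m (by omega), mul_zero]
  have hRj : ((R p L a s) *ᵥ v₁) ⟨j, by omega⟩ = 1 := by
    rw [mulVec_apply]
    rw [Finset.sum_eq_single (⟨j + 1, by omega⟩ : Fin (L.length + 1))]
    · rw [hv₁1]
      have : R p L a s ⟨j, by omega⟩ ⟨j + 1, by omega⟩ = 1 := by
        rw [R, if_pos]
        exact ⟨rfl, hL⟩
      rw [this, one_mul]
    · intro m _ hm
      have : R p L a s ⟨j, by omega⟩ m = 0 := by
        rw [R, if_neg]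
        rintro ⟨h1, -⟩
        exact hm (Fin.ext (by simpa using h1.symm))
      rw [this, zero_mul]
    · intro h
      exact absurd (Finset.mem_univ _) h
  constructor
  · rw [hsplit]
    show v₁ ⟨j, by omega⟩ + ((R p L a s) *ᵥ v₁) ⟨j, by omega⟩ = 1
    rw [hv₁low ⟨j, by omega⟩ (le_refl j), hRj, zero_add]
  · intro i hi
    rw [hsplit]
    show v₁ i + ((R p L a s) *ᵥ v₁) i = 0
    rw [hv₁low i (le_of_lt hi), hRlow i hi, zero_add]

variable (p L) in
/-- The vector `e_n`. -/
noncomputable def eVec : Fin (L.length + 1) → ZMod p :=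
  Pi.single (Fin.last L.length) 1

theorem main_claim (hred : ∀ (j : ℕ) (a : α) (s : Bool),
      L[j]? = some (a, s) → L[j + 1]? ≠ some (a, !s)) :
    ∀ (d j : ℕ) (h : j + d = L.length),
      (matProd p L (L.drop j) *ᵥ eVec p L) ⟨j, by omega⟩ = 1 ∧
        ∀ i : Fin (L.length + 1), (i : ℕ) < j → (matProd p L (L.drop j) *ᵥ eVec p L) i = 0 := by
  intro d
  induction d with
  | zero =>
    intro j hj
    have hj' : j = L.length := by omega
    subst hj'
    rw [List.drop_length]
    rw [matProd]
    simp only [List.map_nil, List.prod_nil, Matrix.one_mulVec]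
    constructor
    · show eVec p L (Fin.last L.length) = 1
      rw [eVec, Pi.single_eq_same]
    · intro i hi
      rw [eVec, Pi.single_eq_of_ne (by intro he; rw [he] at hi; simp at hi)]
  | succ d ih =>
    intro j hj
    have hjlt : j < L.length := by omega
    obtain ⟨u1, u0⟩ := ih (j + 1) (by omega)
    rcases hx : L[j]'hjlt with ⟨a, s⟩
    have hget : L[j]? = some (a, s) := by
      rw [List.getElem?_eq_getElem hjlt, hx]
    have hdrop : L.drop j = (a, s) :: L.drop (j + 1) := by
      rw [List.drop_eq_getElem_cons hjlt, hx]
    have hmp : matProd p L (L.drop j)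
        = ((cond s (gmat p L a) (gmat p L a)⁻¹ : (Mat p L)ˣ) : Mat p L)
          * matProd p L (L.drop (j + 1)) := by
      rw [hdrop, matProd, List.map_cons, List.prod_cons]; rfl
    have hcond : ((cond s (gmat p L a) (gmat p L a)⁻¹ : (Mat p L)ˣ) : Mat p L)
        = (1 + R p L a s) * geomInv p L (R p L a (!s)) := by
      cases s
      · show ((gmat p L a)⁻¹ : (Mat p L)ˣ).val = _
        rw [gmat, _root_.mul_inv_rev, inv_inv, Units.val_mul]
        rfl
      · show ((gmat p L a) : (Mat p L)ˣ).val = _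
        rw [gmat, Units.val_mul]
        rfl
    have hnr : L[j + 1]? ≠ some (a, !s) := hred j a s hget
    have hstep := step hjlt hget hnr (matProd p L (L.drop (j + 1)) *ᵥ eVec p L)
      u1 (fun i hi => u0 i (by omega))
    rw [hmp, hcond, ← Matrix.mulVec_mulVec]
    exact hstep

end Defs

theorem reduced_adj [DecidableEq α] (w : FreeGroup α) :
    ∀ (j : ℕ) (a : α) (s : Bool),
      (w.toWord)[j]? = some (a, s) → (w.toWord)[j + 1]? ≠ some (a, !s) := by
  intro j a s h1 h2
  set L := w.toWord with hLdef
  have hj1 : j + 1 < L.length := (List.getElem?_eq_some_iff.mp h2).1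
  have hj : j < L.length := by omega
  have hx1 : L[j] = (a, s) := by
    have := List.getElem?_eq_getElem hj
    rw [h1] at this; injection this with h'; exact h'.symm
  have hx2 : L[j + 1] = (a, !s) := by
    have := List.getElem?_eq_getElem hj1
    rw [h2] at this; injection this with h'; exact h'.symm
  have hdecomp : L = L.take j ++ (a, s) :: (a, !s) :: L.drop (j + 2) := by
    conv_lhs => rw [← List.take_append_drop j L]
    congr 1
    rw [List.drop_eq_getElem_cons hj, hx1, List.drop_eq_getElem_cons hj1, hx2]
  have hr : FreeGroup.reduce L = L.take j ++ (a, s) :: (a, !s) :: L.drop (j + 2) := by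
    rw [FreeGroup.reduce_toWord, ← hdecomp]
  exact FreeGroup.reduce.not hr

end RPFaux

theorem stmt2 (p : ℕ) (hp : p.Prime) (α : Type*) :
    ResiduallyPFinite p (FreeGroup α) := by
  classical
  intro g hg
  haveI : Fact p.Prime := ⟨hp⟩
  set L : List (α × Bool) := g.toWord with hLdef
  have hLne : L ≠ [] := fun h => hg (FreeGroup.toWord_eq_nil_iff.mp h)
  have hlen : 0 < L.length := List.length_pos_iff.mpr hLne
  refine ⟨↥(RPFaux.U p L), inferInstance, Fintype.ofFinite _,
    FreeGroup.lift (fun a => (⟨RPFaux.gmat p L a, RPFaux.gmat_mem a⟩ : ↥(RPFaux.U p L))),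
    RPFaux.pgroup hp, ?_⟩
  intro h1
  -- lift at the units level
  have h2 : FreeGroup.lift (fun a => RPFaux.gmat p L a) g = 1 := by
    have hcomp : ∀ x : FreeGroup α,
        ((RPFaux.U p L).subtype.comp
          (FreeGroup.lift (fun a => (⟨RPFaux.gmat p L a, RPFaux.gmat_mem a⟩ : ↥(RPFaux.U p L))))) x
          = FreeGroup.lift (fun a => RPFaux.gmat p L a) x := by
      intro x
      exact FreeGroup.lift_unique _ (fun y => by simp) 
    have := hcomp g
    rw [MonoidHom.comp_apply, h1, map_one] at this
    exact this.symm
  -- matrix level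
  have h3 : RPFaux.matProd p L L = 1 := by
    have h4 : FreeGroup.lift (fun a => RPFaux.gmat p L a) (FreeGroup.mk L) = 1 := by
      rw [hLdef, FreeGroup.mk_toWord]; exact h2
    rw [FreeGroup.lift_mk] at h4
    have h5 := congrArg (Units.coeHom (RPFaux.Mat p L)) h4
    rw [map_list_prod, map_one, List.map_map] at h5
    rw [RPFaux.matProd]
    exact h5
  have hmain := RPFaux.main_claim (p := p) (L := L) (RPFaux.reduced_adj g) L.length 0 (by omega)
  rw [List.drop_zero, h3, Matrix.one_mulVec] at hmain
  have h6 : RPFaux.eVec p L ⟨0, by omega⟩ = 1 := hmain.1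
  have h7 : RPFaux.eVec p L ⟨0, by omega⟩ = 0 := by
    rw [RPFaux.eVec, Pi.single_eq_of_ne]
    intro he
    have := congrArg Fin.val he
    simp [Fin.last] at this
    omega
  rw [h6] at h7
  exact one_ne_zero h7
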